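/- Let a₁, a₂, a₃ ∈ ℝ² be affinely independent, with barycentric coordinates λ₁, λ₂, λ₃ (the affine functions with λ_i(a_m) = δ_{im}), edge lengths ℓ₁ = ‖a₂ − a₃‖, ℓ₂ = ‖a₃ − a₁‖, ℓ₃ = ‖a₁ − a₂‖, and cubic bubble b_K = λ₁λ₂λ₃. Define φ₁ = λ₁(2λ₁ − 1) − 6b_K(2λ₁ − 1) + 6b_K [ ((∇λ₁·∇λ₂)/‖∇λ₂‖²)(2λ₂ − 1) + ((∇λ₁·∇λ₃)/‖∇λ₃‖²)(2λ₃ − 1) ], φ̃₁ = λ₁(2λ₁ − 1) + 6b_K(1 − λ₁), ψ̃₂ = 6b_K(2λ₂ − 1), ψ̃₃ = 6b_K(2λ₃ − 1), and set s₂ = (ℓ₃² − ℓ₁²)/(2ℓ₂), s₃ = (ℓ₁² − ℓ₂²)/(2ℓ₃). Then φ₁(x) = φ̃₁(x) + (s₂/ℓ₂) ψ̃₂(x) − (s₃/ℓ₃) ψ̃₃(x) for all x ∈ ℝ². -/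

import Mathlib

set_option maxHeartbeats 1600000


open RealInnerProductSpace

/-- Let `a₁, a₂, a₃ ∈ ℝ²` be affinely independent, with barycentric coordinates
`λ_i(x) = c_i + ⟪g_i, x⟫` (the affine functions with `λ_i(a_m) = δ_{im}`), edge lengths
`ℓ₁ = ‖a₂ − a₃‖`, `ℓ₂ = ‖a₃ − a₁‖`, `ℓ₃ = ‖a₁ − a₂‖`, and cubic bubble `b_K = λ₁λ₂λ₃`.
With `φ₁ = λ₁(2λ₁ − 1) − 6 b_K (2λ₁ − 1)
  + 6 b_K [ ((∇λ₁·∇λ₂)/‖∇λ₂‖²)(2λ₂ − 1) + ((∇λ₁·∇λ₃)/‖∇λ₃‖²)(2λ₃ − 1) ]`,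
`φ̃₁ = λ₁(2λ₁ − 1) + 6 b_K (1 − λ₁)`, `ψ̃₂ = 6 b_K (2λ₂ − 1)`, `ψ̃₃ = 6 b_K (2λ₃ − 1)`,
`s₂ = (ℓ₃² − ℓ₁²)/(2ℓ₂)` and `s₃ = (ℓ₁² − ℓ₂²)/(2ℓ₃)`, one has
`φ₁(x) = φ̃₁(x) + (s₂/ℓ₂) ψ̃₂(x) − (s₃/ℓ₃) ψ̃₃(x)` for all `x ∈ ℝ²`. -/

private lemma ntw_aux_key2 (x1 y1 x2 y2 x3 y3 p1 q1 p2 q2 p3 q3 c1 c2 c3 : ℝ)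
    (h11 : c1 + (p1 * x1 + q1 * y1) = 1) (h12 : c1 + (p1 * x2 + q1 * y2) = 0)
    (h13 : c1 + (p1 * x3 + q1 * y3) = 0)
    (h21 : c2 + (p2 * x1 + q2 * y1) = 0) (h22 : c2 + (p2 * x2 + q2 * y2) = 1)
    (h23 : c2 + (p2 * x3 + q2 * y3) = 0)
    (h31 : c3 + (p3 * x1 + q3 * y1) = 0) (h32 : c3 + (p3 * x2 + q3 * y2) = 0)
    (h33 : c3 + (p3 * x3 + q3 * y3) = 1) :
    (p1 * p2 + q1 * q2) / (p2 ^ 2 + q2 ^ 2)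
      = (((x1 - x2) ^ 2 + (y1 - y2) ^ 2) - ((x2 - x3) ^ 2 + (y2 - y3) ^ 2))
          / (2 * ((x3 - x1) ^ 2 + (y3 - y1) ^ 2)) - 1 / 2 := by
  have eA : p2 * (x2 - x1) + q2 * (y2 - y1) = 1 := by linear_combination h22 - h21
  have eB : p2 * (x3 - x1) + q2 * (y3 - y1) = 0 := by linear_combination h23 - h21
  have eC : p3 * (x2 - x1) + q3 * (y2 - y1) = 0 := by linear_combination h32 - h31
  have eF : p3 * (x3 - x1) + q3 * (y3 - y1) = 1 := by linear_combination h33 - h31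
  have e1u : p1 * (x2 - x1) + q1 * (y2 - y1) = -1 := by linear_combination h12 - h11
  have e1v : p1 * (x3 - x1) + q1 * (y3 - y1) = -1 := by linear_combination h13 - h11
  have hDE : ((x2 - x1) * (y3 - y1) - (y2 - y1) * (x3 - x1)) * (p2 * q3 - p3 * q2) = 1 := by
    linear_combination (p3 * (x3 - x1) + q3 * (y3 - y1)) * eA + eF
      - (p3 * (x2 - x1) + q3 * (y2 - y1)) * eB
  have hD : (x2 - x1) * (y3 - y1) - (y2 - y1) * (x3 - x1) ≠ 0 := by
    intro h; rw [h] at hDE; simp at hDE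
  have hp1 : p1 = (y2 - y1 - (y3 - y1)) / ((x2 - x1) * (y3 - y1) - (y2 - y1) * (x3 - x1)) := by
    rw [eq_div_iff hD]; linear_combination (y3 - y1) * e1u - (y2 - y1) * e1v
  have hq1 : q1 = (x3 - x1 - (x2 - x1)) / ((x2 - x1) * (y3 - y1) - (y2 - y1) * (x3 - x1)) := by
    rw [eq_div_iff hD]; linear_combination (x2 - x1) * e1v - (x3 - x1) * e1u
  have hp2 : p2 = (y3 - y1) / ((x2 - x1) * (y3 - y1) - (y2 - y1) * (x3 - x1)) := by
    rw [eq_div_iff hD]; linear_combination (y3 - y1) * eA - (y2 - y1) * eB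
  have hq2 : q2 = -(x3 - x1) / ((x2 - x1) * (y3 - y1) - (y2 - y1) * (x3 - x1)) := by
    rw [eq_div_iff hD]; linear_combination (x2 - x1) * eB - (x3 - x1) * eA
  have hp3 : p3 = -(y2 - y1) / ((x2 - x1) * (y3 - y1) - (y2 - y1) * (x3 - x1)) := by
    rw [eq_div_iff hD]; linear_combination (y3 - y1) * eC - (y2 - y1) * eF
  have hq3 : q3 = (x2 - x1) / ((x2 - x1) * (y3 - y1) - (y2 - y1) * (x3 - x1)) := by
    rw [eq_div_iff hD]; linear_combination (x2 - x1) * eF - (x3 - x1) * eC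
  have hM2 : (x3 - x1) ^ 2 + (y3 - y1) ^ 2 ≠ 0 := by
    intro h
    have h1 : x3 - x1 = 0 := by nlinarith [sq_nonneg (x3 - x1), sq_nonneg (y3 - y1)]
    have h2 : y3 - y1 = 0 := by nlinarith [sq_nonneg (x3 - x1), sq_nonneg (y3 - y1)]
    rw [h1, h2] at eF; simp at eF
  have hM2' : (y3 - y1) ^ 2 + (x1 - x3) ^ 2 ≠ 0 := by
    intro h; exact hM2 (by linear_combination h)
  have hM2'' : (y3 - y1) ^ 2 + (x3 - x1) ^ 2 ≠ 0 := by
    intro h; exact hM2 (by linear_combination h)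
  rw [hp1, hq1, hp2, hq2]
  generalize (x2 - x1) * (y3 - y1) - (y2 - y1) * (x3 - x1) = D at hD ⊢
  field_simp
  ring

private lemma ntw_aux_key3 (x1 y1 x2 y2 x3 y3 p1 q1 p2 q2 p3 q3 c1 c2 c3 : ℝ)
    (h11 : c1 + (p1 * x1 + q1 * y1) = 1) (h12 : c1 + (p1 * x2 + q1 * y2) = 0)
    (h13 : c1 + (p1 * x3 + q1 * y3) = 0)
    (h21 : c2 + (p2 * x1 + q2 * y1) = 0) (h22 : c2 + (p2 * x2 + q2 * y2) = 1)
    (h23 : c2 + (p2 * x3 + q2 * y3) = 0)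
    (h31 : c3 + (p3 * x1 + q3 * y1) = 0) (h32 : c3 + (p3 * x2 + q3 * y2) = 0)
    (h33 : c3 + (p3 * x3 + q3 * y3) = 1) :
    (p1 * p3 + q1 * q3) / (p3 ^ 2 + q3 ^ 2)
      = -((((x2 - x3) ^ 2 + (y2 - y3) ^ 2) - ((x3 - x1) ^ 2 + (y3 - y1) ^ 2))
          / (2 * ((x1 - x2) ^ 2 + (y1 - y2) ^ 2))) - 1 / 2 := by
  have eA : p2 * (x2 - x1) + q2 * (y2 - y1) = 1 := by linear_combination h22 - h21
  have eB : p2 * (x3 - x1) + q2 * (y3 - y1) = 0 := by linear_combination h23 - h21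
  have eC : p3 * (x2 - x1) + q3 * (y2 - y1) = 0 := by linear_combination h32 - h31
  have eF : p3 * (x3 - x1) + q3 * (y3 - y1) = 1 := by linear_combination h33 - h31
  have e1u : p1 * (x2 - x1) + q1 * (y2 - y1) = -1 := by linear_combination h12 - h11
  have e1v : p1 * (x3 - x1) + q1 * (y3 - y1) = -1 := by linear_combination h13 - h11
  have hDE : ((x2 - x1) * (y3 - y1) - (y2 - y1) * (x3 - x1)) * (p2 * q3 - p3 * q2) = 1 := by
    linear_combination (p3 * (x3 - x1) + q3 * (y3 - y1)) * eA + eF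
      - (p3 * (x2 - x1) + q3 * (y2 - y1)) * eB
  have hD : (x2 - x1) * (y3 - y1) - (y2 - y1) * (x3 - x1) ≠ 0 := by
    intro h; rw [h] at hDE; simp at hDE
  have hp1 : p1 = (y2 - y1 - (y3 - y1)) / ((x2 - x1) * (y3 - y1) - (y2 - y1) * (x3 - x1)) := by
    rw [eq_div_iff hD]; linear_combination (y3 - y1) * e1u - (y2 - y1) * e1v
  have hq1 : q1 = (x3 - x1 - (x2 - x1)) / ((x2 - x1) * (y3 - y1) - (y2 - y1) * (x3 - x1)) := by
    rw [eq_div_iff hD]; linear_combination (x2 - x1) * e1v - (x3 - x1) * e1u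
  have hp2 : p2 = (y3 - y1) / ((x2 - x1) * (y3 - y1) - (y2 - y1) * (x3 - x1)) := by
    rw [eq_div_iff hD]; linear_combination (y3 - y1) * eA - (y2 - y1) * eB
  have hq2 : q2 = -(x3 - x1) / ((x2 - x1) * (y3 - y1) - (y2 - y1) * (x3 - x1)) := by
    rw [eq_div_iff hD]; linear_combination (x2 - x1) * eB - (x3 - x1) * eA
  have hp3 : p3 = -(y2 - y1) / ((x2 - x1) * (y3 - y1) - (y2 - y1) * (x3 - x1)) := by
    rw [eq_div_iff hD]; linear_combination (y3 - y1) * eC - (y2 - y1) * eF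
  have hq3 : q3 = (x2 - x1) / ((x2 - x1) * (y3 - y1) - (y2 - y1) * (x3 - x1)) := by
    rw [eq_div_iff hD]; linear_combination (x2 - x1) * eF - (x3 - x1) * eC
  have hM3 : (x1 - x2) ^ 2 + (y1 - y2) ^ 2 ≠ 0 := by
    intro h
    have h1 : x2 - x1 = 0 := by nlinarith [sq_nonneg (x1 - x2), sq_nonneg (y1 - y2)]
    have h2 : y2 - y1 = 0 := by nlinarith [sq_nonneg (x1 - x2), sq_nonneg (y1 - y2)]
    rw [h1, h2] at eA; simp at eA
  have hM3' : (y2 - y1) ^ 2 + (x1 - x2) ^ 2 ≠ 0 := by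
    intro h; exact hM3 (by linear_combination h)
  have hM3'' : (y2 - y1) ^ 2 + (x2 - x1) ^ 2 ≠ 0 := by
    intro h; exact hM3 (by linear_combination h)
  have hM3''' : (y1 - y2) ^ 2 + (x2 - x1) ^ 2 ≠ 0 := by
    intro h; exact hM3 (by linear_combination h)
  rw [hp1, hq1, hp3, hq3]
  generalize (x2 - x1) * (y3 - y1) - (y2 - y1) * (x3 - x1) = D at hD ⊢
  field_simp
  ring

private lemma ntw_aux_sum (x1 y1 x2 y2 x3 y3 p1 q1 p2 q2 p3 q3 c1 c2 c3 X Y : ℝ)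
    (h11 : c1 + (p1 * x1 + q1 * y1) = 1) (h12 : c1 + (p1 * x2 + q1 * y2) = 0)
    (h13 : c1 + (p1 * x3 + q1 * y3) = 0)
    (h21 : c2 + (p2 * x1 + q2 * y1) = 0) (h22 : c2 + (p2 * x2 + q2 * y2) = 1)
    (h23 : c2 + (p2 * x3 + q2 * y3) = 0)
    (h31 : c3 + (p3 * x1 + q3 * y1) = 0) (h32 : c3 + (p3 * x2 + q3 * y2) = 0)
    (h33 : c3 + (p3 * x3 + q3 * y3) = 1) :
    (c1 + (p1 * X + q1 * Y)) + (c2 + (p2 * X + q2 * Y)) + (c3 + (p3 * X + q3 * Y)) = 1 := by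
  have eA : p2 * (x2 - x1) + q2 * (y2 - y1) = 1 := by linear_combination h22 - h21
  have eB : p2 * (x3 - x1) + q2 * (y3 - y1) = 0 := by linear_combination h23 - h21
  have eC : p3 * (x2 - x1) + q3 * (y2 - y1) = 0 := by linear_combination h32 - h31
  have eF : p3 * (x3 - x1) + q3 * (y3 - y1) = 1 := by linear_combination h33 - h31
  have e1u : p1 * (x2 - x1) + q1 * (y2 - y1) = -1 := by linear_combination h12 - h11
  have e1v : p1 * (x3 - x1) + q1 * (y3 - y1) = -1 := by linear_combination h13 - h11
  have hDE : ((x2 - x1) * (y3 - y1) - (y2 - y1) * (x3 - x1)) * (p2 * q3 - p3 * q2) = 1 := by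
    linear_combination (p3 * (x3 - x1) + q3 * (y3 - y1)) * eA + eF
      - (p3 * (x2 - x1) + q3 * (y2 - y1)) * eB
  have hD : (x2 - x1) * (y3 - y1) - (y2 - y1) * (x3 - x1) ≠ 0 := by
    intro h; rw [h] at hDE; simp at hDE
  have hp1 : p1 = (y2 - y1 - (y3 - y1)) / ((x2 - x1) * (y3 - y1) - (y2 - y1) * (x3 - x1)) := by
    rw [eq_div_iff hD]; linear_combination (y3 - y1) * e1u - (y2 - y1) * e1v
  have hq1 : q1 = (x3 - x1 - (x2 - x1)) / ((x2 - x1) * (y3 - y1) - (y2 - y1) * (x3 - x1)) := by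
    rw [eq_div_iff hD]; linear_combination (x2 - x1) * e1v - (x3 - x1) * e1u
  have hp2 : p2 = (y3 - y1) / ((x2 - x1) * (y3 - y1) - (y2 - y1) * (x3 - x1)) := by
    rw [eq_div_iff hD]; linear_combination (y3 - y1) * eA - (y2 - y1) * eB
  have hq2 : q2 = -(x3 - x1) / ((x2 - x1) * (y3 - y1) - (y2 - y1) * (x3 - x1)) := by
    rw [eq_div_iff hD]; linear_combination (x2 - x1) * eB - (x3 - x1) * eA
  have hp3 : p3 = -(y2 - y1) / ((x2 - x1) * (y3 - y1) - (y2 - y1) * (x3 - x1)) := by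
    rw [eq_div_iff hD]; linear_combination (y3 - y1) * eC - (y2 - y1) * eF
  have hq3 : q3 = (x2 - x1) / ((x2 - x1) * (y3 - y1) - (y2 - y1) * (x3 - x1)) := by
    rw [eq_div_iff hD]; linear_combination (x2 - x1) * eF - (x3 - x1) * eC
  simp only [hp1, hp2, hp3, hq1, hq2, hq3] at h11 h21 h31 ⊢
  linear_combination h11 + h21 + h31

theorem ntw_basis_identity
    (a₁ a₂ a₃ g₁ g₂ g₃ : EuclideanSpace ℝ (Fin 2)) (c₁ c₂ c₃ : ℝ)
    (hind : AffineIndependent ℝ ![a₁, a₂, a₃])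
    (h11 : c₁ + ⟪g₁, a₁⟫ = 1) (h12 : c₁ + ⟪g₁, a₂⟫ = 0) (h13 : c₁ + ⟪g₁, a₃⟫ = 0)
    (h21 : c₂ + ⟪g₂, a₁⟫ = 0) (h22 : c₂ + ⟪g₂, a₂⟫ = 1) (h23 : c₂ + ⟪g₂, a₃⟫ = 0)
    (h31 : c₃ + ⟪g₃, a₁⟫ = 0) (h32 : c₃ + ⟪g₃, a₂⟫ = 0) (h33 : c₃ + ⟪g₃, a₃⟫ = 1) :
    ∀ x : EuclideanSpace ℝ (Fin 2),
      let lam1 := c₁ + ⟪g₁, x⟫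
      let lam2 := c₂ + ⟪g₂, x⟫
      let lam3 := c₃ + ⟪g₃, x⟫
      let bK := lam1 * lam2 * lam3
      let ℓ₁ := ‖a₂ - a₃‖
      let ℓ₂ := ‖a₃ - a₁‖
      let ℓ₃ := ‖a₁ - a₂‖
      let s₂ := (ℓ₃ ^ 2 - ℓ₁ ^ 2) / (2 * ℓ₂)
      let s₃ := (ℓ₁ ^ 2 - ℓ₂ ^ 2) / (2 * ℓ₃)
      let φ₁ := lam1 * (2 * lam1 - 1) - 6 * bK * (2 * lam1 - 1)
        + 6 * bK * ((⟪g₁, g₂⟫ / ‖g₂‖ ^ 2) * (2 * lam2 - 1)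
          + (⟪g₁, g₃⟫ / ‖g₃‖ ^ 2) * (2 * lam3 - 1))
      let φt₁ := lam1 * (2 * lam1 - 1) + 6 * bK * (1 - lam1)
      let ψt₂ := 6 * bK * (2 * lam2 - 1)
      let ψt₃ := 6 * bK * (2 * lam3 - 1)
      φ₁ = φt₁ + (s₂ / ℓ₂) * ψt₂ - (s₃ / ℓ₃) * ψt₃ := by
  have inner2 : ∀ u v : EuclideanSpace ℝ (Fin 2), ⟪u, v⟫ = u 0 * v 0 + u 1 * v 1 := by
    intro u v; simp [PiLp.inner_apply, Fin.sum_univ_two]; ring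
  have normsub2 : ∀ u v : EuclideanSpace ℝ (Fin 2),
      ‖u - v‖ ^ 2 = (u 0 - v 0) ^ 2 + (u 1 - v 1) ^ 2 := by
    intro u v; rw [EuclideanSpace.norm_sq_eq]; simp [Fin.sum_univ_two]
  have norm2 : ∀ u : EuclideanSpace ℝ (Fin 2), ‖u‖ ^ 2 = u 0 ^ 2 + u 1 ^ 2 := by
    intro u; rw [EuclideanSpace.norm_sq_eq]; simp [Fin.sum_univ_two]
  simp only [inner2] at h11 h12 h13 h21 h22 h23 h31 h32 h33
  intro x
  dsimp only
  rw [div_div, div_div,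
    show (2 * ‖a₃ - a₁‖ * ‖a₃ - a₁‖ : ℝ) = 2 * ‖a₃ - a₁‖ ^ 2 by ring,
    show (2 * ‖a₁ - a₂‖ * ‖a₁ - a₂‖ : ℝ) = 2 * ‖a₁ - a₂‖ ^ 2 by ring]
  simp only [normsub2, norm2, inner2]
  have key2 := ntw_aux_key2 (a₁ 0) (a₁ 1) (a₂ 0) (a₂ 1) (a₃ 0) (a₃ 1) (g₁ 0) (g₁ 1) (g₂ 0) (g₂ 1) (g₃ 0) (g₃ 1) c₁ c₂ c₃ h11 h12 h13 h21 h22 h23 h31 h32 h33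
  have key3 := ntw_aux_key3 (a₁ 0) (a₁ 1) (a₂ 0) (a₂ 1) (a₃ 0) (a₃ 1) (g₁ 0) (g₁ 1) (g₂ 0) (g₂ 1) (g₃ 0) (g₃ 1) c₁ c₂ c₃ h11 h12 h13 h21 h22 h23 h31 h32 h33
  have hsum := ntw_aux_sum (a₁ 0) (a₁ 1) (a₂ 0) (a₂ 1) (a₃ 0) (a₃ 1) (g₁ 0) (g₁ 1) (g₂ 0) (g₂ 1) (g₃ 0) (g₃ 1) c₁ c₂ c₃ (x 0) (x 1) h11 h12 h13 h21 h22 h23 h31 h32 h33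
  linear_combination (6 * ((c₁ + (g₁ 0 * x 0 + g₁ 1 * x 1)) * (c₂ + (g₂ 0 * x 0 + g₂ 1 * x 1)) * (c₃ + (g₃ 0 * x 0 + g₃ 1 * x 1))) * (2 * (c₂ + (g₂ 0 * x 0 + g₂ 1 * x 1)) - 1)) * key2
    + (6 * ((c₁ + (g₁ 0 * x 0 + g₁ 1 * x 1)) * (c₂ + (g₂ 0 * x 0 + g₂ 1 * x 1)) * (c₃ + (g₃ 0 * x 0 + g₃ 1 * x 1))) * (2 * (c₃ + (g₃ 0 * x 0 + g₃ 1 * x 1)) - 1)) * key3 - (6 * ((c₁ + (g₁ 0 * x 0 + g₁ 1 * x 1)) * (c₂ + (g₂ 0 * x 0 + g₂ 1 * x 1)) * (c₃ + (g₃ 0 * x 0 + g₃ 1 * x 1)))) * hsum
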